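/- Fix P > 0. For each integer n ≥ 2 let r_n ∈ (0,1) and w_n ∈ (0,1), write r̄_n = w_n^{1/(n−1)}, and suppose they satisfy the two equations: (E1) ((w_n + n·P·(1−r_n) + P·r_n)/(n·(1−r_n)·(P+w_n)))·((P·r_n + w_n)/(1−r_n))^{1/(n−1)} − ((w_n + n·P)/(n·(P+w_n)))·w_n^{1/(n−1)} = 1, and (E2) ((w_n − n·w_n·(1−r_n) + P·r_n)/(n·(1−r_n)·(P+w_n)))·((P·r_n + w_n)/(1−r_n))^{1/(n−1)} − ((w_n − n·w_n)/(n·(P+w_n)))·w_n^{1/(n−1)} = w_n^{1/(n−1)}. Assume additionally that there is δ > 0 with δ ≤ r_n ≤ 1−δ for all n, and that r̄_n → 0 as n → ∞. Then r_n → 1/(1+P) and n·P·r̄_n → 1 as n → ∞; i.e., the equilibrium cutoff tends to 1/(1+P) and the average risk satisfies r̄_n ∼ 1/(nP). -/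

import Mathlib

open Filter

theorem stmt12 (P : ℝ) (hP : 0 < P) (r w rbar : ℕ → ℝ)
    (hr : ∀ n, 2 ≤ n → r n ∈ Set.Ioo (0 : ℝ) 1)
    (hw : ∀ n, 2 ≤ n → w n ∈ Set.Ioo (0 : ℝ) 1)
    (hrbar : ∀ n, 2 ≤ n → rbar n = w n ^ (1 / ((n : ℝ) - 1)))
    -- (E1): the normalization constraint ∫ f = 1 in closed form
    (hE1 : ∀ n, 2 ≤ n →
      ((w n + (n : ℝ) * P * (1 - r n) + P * r n) / ((n : ℝ) * (1 - r n) * (P + w n))) *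
          ((P * r n + w n) / (1 - r n)) ^ (1 / ((n : ℝ) - 1)) -
        ((w n + (n : ℝ) * P) / ((n : ℝ) * (P + w n))) * w n ^ (1 / ((n : ℝ) - 1)) = 1)
    -- (E2): the mean constraint ∫ x f(x) dx = r̄ in closed form
    (hE2 : ∀ n, 2 ≤ n →
      ((w n - (n : ℝ) * w n * (1 - r n) + P * r n) / ((n : ℝ) * (1 - r n) * (P + w n))) *
          ((P * r n + w n) / (1 - r n)) ^ (1 / ((n : ℝ) - 1)) -
        ((w n - (n : ℝ) * w n) / ((n : ℝ) * (P + w n))) * w n ^ (1 / ((n : ℝ) - 1))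
        = w n ^ (1 / ((n : ℝ) - 1)))
    (δ : ℝ) (hδ : 0 < δ) (hbound : ∀ n, 2 ≤ n → δ ≤ r n ∧ r n ≤ 1 - δ)
    (hrbar0 : Tendsto rbar atTop (nhds 0)) :
    Tendsto r atTop (nhds (1 / (1 + P))) ∧
    Tendsto (fun n : ℕ => (n : ℝ) * P * rbar n) atTop (nhds 1) := by
  have key : ∀ n, 2 ≤ n → P * r n + w n = 1 - r n ∧
      (n:ℝ) * P * rbar n = 1 - (n:ℝ) * w n - w n * rbar n := by
    intro n hn
    obtain ⟨hr0, hr1⟩ := hr n hn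
    obtain ⟨hw0, hw1⟩ := hw n hn
    have hn2 : (2:ℝ) ≤ (n:ℝ) := by exact_mod_cast hn
    have hn1 : (0:ℝ) < (n:ℝ) - 1 := by linarith
    have hn0 : (0:ℝ) < (n:ℝ) := by linarith
    have h1x : (0:ℝ) < 1 - r n := by linarith
    have hnum : (0:ℝ) < P * r n + w n := by nlinarith [mul_pos hP hr0]
    have hPw : (0:ℝ) < P + w n := by linarith
    have e1 := hE1 n hn
    have e2 := hE2 n hn
    set A := ((P * r n + w n) / (1 - r n)) ^ (1 / ((n : ℝ) - 1)) with hAdef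
    set B := w n ^ (1 / ((n : ℝ) - 1)) with hBdef
    have c : (w n + (n:ℝ)*P*(1 - r n) + P * r n) / ((n:ℝ) * (1 - r n) * (P + w n))
        - (w n - (n:ℝ)*(w n)*(1 - r n) + P * r n) / ((n:ℝ) * (1 - r n) * (P + w n)) = 1 := by
      rw [div_sub_div_same, div_eq_one_iff_eq (by positivity)]
      ring
    have d : (w n + (n:ℝ)*P) / ((n:ℝ) * (P + w n)) - (w n - (n:ℝ)*(w n)) / ((n:ℝ) * (P + w n)) = 1 := by
      rw [div_sub_div_same, div_eq_one_iff_eq (by positivity)]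
      ring
    have hA1 : A = 1 := by linear_combination e1 - e2 - A * c + B * d
    have hbpos : 0 < (P * r n + w n) / (1 - r n) := div_pos hnum h1x
    have hrel : P * r n + w n = 1 - r n := by
      have h2 : ((P * r n + w n) / (1 - r n)) ^ ((1 / ((n:ℝ)-1)) * ((n:ℝ)-1)) = 1 := by
        rw [Real.rpow_mul hbpos.le, ← hAdef, hA1, Real.one_rpow]
      rw [one_div, inv_mul_cancel₀ hn1.ne', Real.rpow_one] at h2
      have := (div_eq_one_iff_eq h1x.ne').mp h2
      linarith
    refine ⟨hrel, ?_⟩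
    rw [hA1, mul_one] at e1
    rw [hrbar n hn, ← hBdef]
    have hfac : w n + (n:ℝ)*P*(1 - r n) + P * r n = (1 - r n) * (1 + (n:ℝ)*P) := by
      linear_combination hrel
    rw [hfac] at e1
    field_simp at e1
    have hden : ((n:ℝ)*(1 - r n)*(P + w n)) ≠ 0 := by positivity
    exact mul_left_cancel₀ hden (by linear_combination (-((n:ℝ)*(1 - r n)*(P + w n))) * e1)
  -- w n → 0
  have hwle : ∀ n, 2 ≤ n → 0 ≤ w n ∧ w n ≤ rbar n := by
    intro n hn
    obtain ⟨hw0, hw1⟩ := hw n hn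
    have hn2 : (2:ℝ) ≤ (n:ℝ) := by exact_mod_cast hn
    have hle : 1 / ((n:ℝ) - 1) ≤ 1 := by
      rw [div_le_one (by linarith)]; linarith
    refine ⟨hw0.le, ?_⟩
    rw [hrbar n hn]
    calc w n = w n ^ (1:ℝ) := (Real.rpow_one _).symm
      _ ≤ w n ^ (1 / ((n:ℝ) - 1)) := Real.rpow_le_rpow_of_exponent_ge hw0 hw1.le hle
  have hw0' : Tendsto w atTop (nhds 0) := by
    apply tendsto_of_tendsto_of_tendsto_of_le_of_le' tendsto_const_nhds hrbar0
    · filter_upwards [eventually_ge_atTop 2] with n hn using (hwle n hn).1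
    · filter_upwards [eventually_ge_atTop 2] with n hn using (hwle n hn).2
  -- n * w n → 0
  have hnw : Tendsto (fun n : ℕ => (n:ℝ) * w n) atTop (nhds 0) := by
    have h2 : Tendsto (fun n : ℕ => 2 * ((n:ℝ) * (1/2:ℝ) ^ n)) atTop (nhds (2 * 0)) :=
      (tendsto_self_mul_const_pow_of_lt_one (by norm_num) (by norm_num)).const_mul 2
    rw [mul_zero] at h2
    apply tendsto_of_tendsto_of_tendsto_of_le_of_le' tendsto_const_nhds h2
    · filter_upwards [eventually_ge_atTop 2] with n hn
      have := (hw n hn).1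
      positivity
    · have hrb : ∀ᶠ n in atTop, rbar n ≤ 1/2 := by
        have := hrbar0.eventually (eventually_le_nhds (by norm_num : (0:ℝ) < 1/2))
        exact this
      filter_upwards [eventually_ge_atTop 2, hrb] with n hn hrbn
      obtain ⟨hw0, hw1⟩ := hw n hn
      have hn2 : (2:ℝ) ≤ (n:ℝ) := by exact_mod_cast hn
      have hrb0 : 0 ≤ rbar n := by
        rw [hrbar n hn]; positivity
      have hwval : w n = rbar n ^ (n - 1) := by
        rw [hrbar n hn, ← Real.rpow_natCast (w n ^ (1 / ((n:ℝ) - 1))) (n-1),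
          ← Real.rpow_mul hw0.le]
        have : (1 / ((n:ℝ) - 1)) * ((n:ℕ) - 1 : ℕ) = 1 := by
          have : (((n:ℕ) - 1 : ℕ) : ℝ) = (n:ℝ) - 1 := by
            have : 1 ≤ n := by omega
            push_cast [Nat.cast_sub this]
            ring
          rw [this, one_div, inv_mul_cancel₀ (by linarith)]
        rw [this, Real.rpow_one]
      have h1 : w n ≤ (1/2:ℝ) ^ (n-1) := by
        rw [hwval]
        exact pow_le_pow_left₀ hrb0 hrbn _
      have h3 : (n:ℝ) * w n ≤ (n:ℝ) * (1/2:ℝ) ^ (n-1) :=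
        mul_le_mul_of_nonneg_left h1 (by positivity)
      have hp : (1/2:ℝ) ^ n = (1/2:ℝ) ^ (n-1) * (1/2) := by
        rw [← pow_succ]; congr 1; omega
      have h4 : (n:ℝ) * (1/2:ℝ) ^ (n-1) = 2 * ((n:ℝ) * (1/2:ℝ) ^ n) := by
        rw [hp]; ring
      linarith [h3, h4.le]
  -- conclusions
  constructor
  · have hlim : Tendsto (fun n : ℕ => (1 - w n) / (1 + P)) atTop (nhds (1 / (1 + P))) := by
      have := ((tendsto_const_nhds (x := (1:ℝ))).sub hw0').div_const (1 + P)
      simpa using this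
    apply hlim.congr'
    filter_upwards [eventually_ge_atTop 2] with n hn
    have hrel := (key n hn).1
    field_simp
    linarith
  · have hlim : Tendsto (fun n : ℕ => 1 - (n:ℝ) * w n - w n * rbar n) atTop (nhds 1) := by
      have := ((tendsto_const_nhds (x := (1:ℝ))).sub hnw).sub (hw0'.mul hrbar0)
      simpa using this
    apply hlim.congr'
    filter_upwards [eventually_ge_atTop 2] with n hn
    exact ((key n hn).2).symm
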